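/- Let 𝒱 = {V_1, V_2, …} be a countable set of Volterra quadratic stochastic operators on S^{m-1} such that (V_k x)_k = x_k^2 for all x ∈ S^{m-1} and all k ∈ {1,…,m}, and let (ν_j)_{j≥1} be a probability distribution on 𝒱 with ν_j > 0 for all j ∈ {1,…,m}. Let (T_n)_{n≥1} be a sequence of independent random operators with ℙ(T_n = V_j) = ν_j for all j and n. Then for every ε > 0 there exist N ∈ ℕ and q > 0 such that for every x ∈ S^{m-1}: ℙ((T_N ∘ T_{N-1} ∘ ⋯ ∘ T_1)(x) ∈ U_ε) ≥ q. (One may take N = r(m−1) and q = ν_1^r ⋯ ν_m^r where r ∈ ℕ satisfies −2^r + (m−2)r < log(ε)/log(2).) -/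

import Mathlib

open MeasureTheory ProbabilityTheory

/-- The map of a quadratic stochastic operator given by coefficients `p`. -/
noncomputable def qsoMap {m : ℕ} (p : Fin m → Fin m → Fin m → ℝ) (x : Fin m → ℝ) :
    Fin m → ℝ :=
  fun k => ∑ i, ∑ j, p i j k * x i * x j

section aux
variable {m : ℕ}

lemma qso_mem (p : Fin m → Fin m → Fin m → ℝ) (hp : ∀ i j l, 0 ≤ p i j l)
    (hs : ∀ i j, ∑ l, p i j l = 1) {x : Fin m → ℝ} (hx : x ∈ stdSimplex ℝ (Fin m)) :
    qsoMap p x ∈ stdSimplex ℝ (Fin m) := by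
  constructor
  · intro k
    exact Finset.sum_nonneg fun i _ => Finset.sum_nonneg fun j _ =>
      mul_nonneg (mul_nonneg (hp i j k) (hx.1 i)) (hx.1 j)
  · have h1 : ∀ i j : Fin m, ∑ k, p i j k * x i * x j = x i * x j := by
      intro i j
      rw [← Finset.sum_mul, ← Finset.sum_mul, hs, one_mul]
    calc ∑ k, qsoMap p x k = ∑ k, ∑ i, ∑ j, p i j k * x i * x j := rfl
      _ = ∑ i, ∑ k, ∑ j, p i j k * x i * x j := Finset.sum_comm
      _ = ∑ i, ∑ j, ∑ k, p i j k * x i * x j :=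
          Finset.sum_congr rfl fun i _ => Finset.sum_comm
      _ = ∑ i, ∑ j, x i * x j := by simp_rw [h1]
      _ = 1 := by
          simp_rw [← Finset.mul_sum, hx.2, mul_one]
          exact hx.2

lemma qso_double (p : Fin m → Fin m → Fin m → ℝ) (hp : ∀ i j l, 0 ≤ p i j l)
    (hs : ∀ i j, ∑ l, p i j l = 1)
    (hvol : ∀ i j l, l ≠ i → l ≠ j → p i j l = 0)
    {x : Fin m → ℝ} (hx : x ∈ stdSimplex ℝ (Fin m)) (l : Fin m) :
    qsoMap p x l ≤ 2 * x l := by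
  have hp1 : ∀ i j k, p i j k ≤ 1 := by
    intro i j k
    rw [← hs i j]
    exact Finset.single_le_sum (fun t _ => hp i j t) (Finset.mem_univ k)
  have hle : ∀ i j : Fin m, p i j l * x i * x j ≤
      (if i = l then x l * x j else 0) + (if j = l then x i * x l else 0) := by
    intro i j
    by_cases hi : i = l
    · rw [if_pos hi, hi]
      have h2 : (0:ℝ) ≤ if j = l then x l * x l else 0 := by
        split
        · exact mul_nonneg (hx.1 _) (hx.1 _)
        · exact le_refl 0
      nlinarith [h2, mul_nonneg (mul_nonneg (sub_nonneg.2 (hp1 l j l)) (hx.1 l)) (hx.1 j)]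
    · by_cases hj : j = l
      · rw [if_neg hi, if_pos hj, hj, zero_add]
        nlinarith [mul_nonneg (mul_nonneg (sub_nonneg.2 (hp1 i l l)) (hx.1 i)) (hx.1 l)]
      · rw [hvol i j l (Ne.symm hi) (Ne.symm hj), if_neg hi, if_neg hj]
        simp
  have hq : qsoMap p x l = ∑ i, ∑ j, p i j l * x i * x j := rfl
  rw [hq]
  calc (∑ i, ∑ j, p i j l * x i * x j)
      ≤ ∑ i, ∑ j, ((if i = l then x l * x j else 0) + (if j = l then x i * x l else 0)) :=
        Finset.sum_le_sum fun i _ => Finset.sum_le_sum fun j _ => hle i j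
    _ = (∑ i, ∑ j, (if i = l then x l * x j else 0))
        + ∑ i, ∑ j, (if j = l then x i * x l else 0) := by
        rw [← Finset.sum_add_distrib]
        exact Finset.sum_congr rfl fun i _ => Finset.sum_add_distrib
    _ = 2 * x l := by
        have e1 : (∑ i, ∑ j, (if i = l then x l * x j else 0)) = x l := by
          rw [Finset.sum_eq_single l]
          · rw [Finset.sum_congr rfl (fun j _ => if_pos rfl), ← Finset.mul_sum, hx.2, mul_one]
          · intro b _ hb
            simp [hb]
          · simp
        have e2 : (∑ i, ∑ j, (if j = l then x i * x l else 0)) = x l := by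
          have : ∀ i : Fin m, (∑ j, (if j = l then x i * x l else 0)) = x i * x l := by
            intro i
            simp [Finset.sum_ite_eq']
          simp_rw [this, ← Finset.sum_mul, hx.2, one_mul]
        rw [e1, e2]; ring
end aux

section iter
variable {m : ℕ} (P : ℕ → Fin m → Fin m → Fin m → ℝ)

lemma foldl_word (hp : ∀ n i j l, 0 ≤ P n i j l) (hs : ∀ n i j, ∑ l, P n i j l = 1)
    (hvol : ∀ n i j l, l ≠ i → l ≠ j → P n i j l = 0) :
    ∀ (w : List ℕ) (x : Fin m → ℝ), x ∈ stdSimplex ℝ (Fin m) →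
      (w.foldl (fun y n => qsoMap (P n) y) x ∈ stdSimplex ℝ (Fin m)) ∧
      ∀ t, (w.foldl (fun y n => qsoMap (P n) y) x) t ≤ 2 ^ w.length * x t := by
  intro w
  induction w with
  | nil => intro x hx; exact ⟨hx, fun t => by simp⟩
  | cons a w ih =>
    intro x hx
    have hx' := qso_mem (P a) (hp a) (hs a) hx
    obtain ⟨h1, h2⟩ := ih (qsoMap (P a) x) hx'
    rw [List.foldl_cons]
    refine ⟨h1, fun t => ?_⟩
    calc (w.foldl (fun y n => qsoMap (P n) y) (qsoMap (P a) x)) t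
        ≤ 2 ^ w.length * (qsoMap (P a) x) t := h2 t
      _ ≤ 2 ^ w.length * (2 * x t) := by
          have := qso_double (P a) (hp a) (hs a) (hvol a) hx t
          have h2p : (0:ℝ) ≤ 2 ^ w.length := by positivity
          nlinarith
      _ = 2 ^ (a :: w).length * x t := by
          rw [List.length_cons, pow_succ]; ring

lemma foldl_replicate (hp : ∀ n i j l, 0 ≤ P n i j l) (hs : ∀ n i j, ∑ l, P n i j l = 1)
    (hsq : ∀ k : Fin m, ∀ x ∈ stdSimplex ℝ (Fin m), qsoMap (P (k : ℕ)) x k = x k ^ 2)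
    (k : Fin m) :
    ∀ (s : ℕ) (x : Fin m → ℝ), x ∈ stdSimplex ℝ (Fin m) →
      ((List.replicate s ((k : ℕ))).foldl (fun y n => qsoMap (P n) y) x) k
        = x k ^ (2 ^ s) := by
  intro s
  induction s with
  | zero => intro x _; simp
  | succ s ih =>
    intro x hx
    rw [List.replicate_succ, List.foldl_cons, ih _ (qso_mem (P (k:ℕ)) (hp _) (hs _) hx),
      hsq k x hx, ← pow_mul]
    congr 1
    rw [pow_succ]
    ring

end iter

lemma crush_all {m : ℕ} (P : ℕ → Fin m → Fin m → Fin m → ℝ)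
    (hp : ∀ n i j l, 0 ≤ P n i j l) (hs : ∀ n i j, ∑ l, P n i j l = 1)
    (hvol : ∀ n i j l, l ≠ i → l ≠ j → P n i j l = 0)
    (hsq : ∀ k : Fin m, ∀ x ∈ stdSimplex ℝ (Fin m), qsoMap (P (k : ℕ)) x k = x k ^ 2)
    (r : ℕ) :
    ∀ (c : ℕ), ∀ x ∈ stdSimplex ℝ (Fin m), c + 1 ≤ m →
      ∃ (w : List ℕ) (S : Finset (Fin m)),
        w.length = c * r ∧ (∀ n ∈ w, n < m) ∧ S.card = c ∧
        ∀ j ∈ S, (w.foldl (fun y n => qsoMap (P n) y) x) j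
            ≤ 2 ^ (c * r) * (1/2 : ℝ) ^ (2 ^ r) := by
  intro c
  induction c with
  | zero =>
    intro x hx _
    exact ⟨[], ∅, by simp, by simp, by simp, by simp⟩
  | succ c ih =>
    intro x hx hc
    obtain ⟨w, S, hlen, hmem, hcard, hbd⟩ := ih x hx (by omega)
    set y := w.foldl (fun y n => qsoMap (P n) y) x with hy_def
    have hy : y ∈ stdSimplex ℝ (Fin m) := (foldl_word P hp hs hvol w x hx).1
    have hSc : 2 ≤ Sᶜ.card := by
      rw [Finset.card_compl, hcard, Fintype.card_fin]; omega
    obtain ⟨a, ha, b, hb, hab⟩ := Finset.one_lt_card.mp (by omega : 1 < Sᶜ.card)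
    have hpair : y a + y b ≤ 1 := by
      have h1 : ({a, b} : Finset (Fin m)).sum y ≤ Finset.univ.sum y :=
        Finset.sum_le_sum_of_subset_of_nonneg (Finset.subset_univ _)
          (fun i _ _ => hy.1 i)
      rw [Finset.sum_pair hab, hy.2] at h1
      exact h1
    obtain ⟨j₀, hj₀c, hj₀le⟩ : ∃ j₀, j₀ ∈ Sᶜ ∧ y j₀ ≤ 1/2 := by
      by_cases h : y a ≤ 1/2
      · exact ⟨a, ha, h⟩
      · exact ⟨b, hb, by linarith⟩
    refine ⟨w ++ List.replicate r ((j₀ : ℕ)), insert j₀ S, ?_, ?_, ?_, ?_⟩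
    · rw [List.length_append, List.length_replicate, hlen]; ring
    · intro n hn
      rcases List.mem_append.mp hn with h | h
      · exact hmem n h
      · rw [List.eq_of_mem_replicate h]; exact j₀.isLt
    · rw [Finset.card_insert_of_notMem (Finset.mem_compl.mp hj₀c), hcard]
    · intro j hj
      rw [List.foldl_append, ← hy_def]
      have hκ : (0:ℝ) ≤ (1/2 : ℝ) ^ (2 ^ r) := by positivity
      rcases Finset.mem_insert.mp hj with rfl | hjS
      · rw [foldl_replicate P hp hs hsq j r y hy]
        have h1 : y j ^ (2^r) ≤ (1/2:ℝ)^(2^r) := pow_le_pow_left₀ (hy.1 j) hj₀le _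
        have h2 : (1:ℝ) ≤ 2 ^ ((c+1)*r) := one_le_pow₀ (by norm_num : (1:ℝ) ≤ 2)
        nlinarith
      · have hdb := (foldl_word P hp hs hvol (List.replicate r ((j₀:ℕ))) y hy).2 j
        rw [List.length_replicate] at hdb
        have hbj := hbd j hjS
        have h2r : (0:ℝ) ≤ 2 ^ r := by positivity
        calc ((List.replicate r ((j₀:ℕ))).foldl (fun y n => qsoMap (P n) y) y) j
            ≤ 2^r * y j := hdb
          _ ≤ 2^r * (2^(c*r) * (1/2:ℝ)^(2^r)) := by nlinarith
          _ = 2^((c+1)*r) * (1/2:ℝ)^(2^r) := by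
              rw [← mul_assoc, ← pow_add]
              congr 2
              ring

lemma sq_le_two_pow : ∀ r : ℕ, 4 ≤ r → r * r ≤ 2 ^ r := by
  intro r hr
  induction r with
  | zero => omega
  | succ n ih =>
    rcases Nat.lt_or_ge n 4 with h | h
    · have hn : n = 3 := by omega
      subst hn; norm_num
    · have h1 := ih (by omega)
      rw [pow_succ]
      nlinarith

lemma exists_good_r (m : ℕ) (hm : 2 ≤ m) {ε : ℝ} (hε : 0 < ε) :
    ∃ r : ℕ, (2:ℝ) ^ ((m-1)*r) * (1/2:ℝ) ^ (2^r) < ε := by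
  obtain ⟨s, hs⟩ := exists_pow_lt_of_lt_one hε (by norm_num : (1/2:ℝ) < 1)
  refine ⟨max s (max m 4), ?_⟩
  set r := max s (max m 4) with hrdef
  have hr4 : 4 ≤ r := le_trans (le_max_right m 4) (le_max_right s _)
  have hrm : m ≤ r := le_trans (le_max_left m 4) (le_max_right s _)
  have hrs : s ≤ r := le_max_left _ _
  have key : m * r ≤ 2 ^ r :=
    le_trans (Nat.mul_le_mul_right r hrm) (sq_le_two_pow r hr4)
  have hexp : (m-1)*r + r ≤ 2 ^ r := by
    have e : (m-1)*r + r = m * r := by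
      rcases Nat.exists_eq_add_of_le hm with ⟨t, ht⟩
      subst ht
      have e2 : 2 + t - 1 = t + 1 := by omega
      rw [e2]; ring
    rw [e]; exact key
  have hAB : (m-1)*r ≤ 2^r := le_trans (Nat.le_add_right _ _) hexp
  have hsub : s ≤ 2^r - (m-1)*r := by
    have h1 : (m-1)*r + s ≤ 2^r := le_trans (by omega) hexp
    omega
  calc (2:ℝ)^((m-1)*r) * (1/2)^(2^r)
      = (2:ℝ)^((m-1)*r) * ((1/2)^((m-1)*r) * (1/2)^(2^r - (m-1)*r)) := by
        rw [← pow_add, Nat.add_sub_cancel' hAB]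
    _ = ((2:ℝ) * (1/2))^((m-1)*r) * (1/2)^(2^r - (m-1)*r) := by
        rw [mul_pow]; ring
    _ = (1/2:ℝ)^(2^r - (m-1)*r) := by norm_num
    _ ≤ (1/2:ℝ)^s := pow_le_pow_of_le_one (by norm_num) (by norm_num) hsub
    _ < ε := hs


/-- For i.i.d. random Volterra QSOs `T_n = V_{ξ_n}` chosen from a countable
family `𝒱 = {V_0, V_1, …}` of Volterra QSOs with `(V_k x)_k = x_k^2` for `k < m` and
`ℙ(T_n = V_j) = ν_j`, `ν_j > 0` for `j < m`: for every `ε > 0` there are `N ∈ ℕ` and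
`q > 0` such that for every `x ∈ S^{m-1}` the probability that
`T_N ∘ ⋯ ∘ T_1 (x) ∈ U_ε` is at least `q`. -/
theorem random_iteration_reaches_vertex_nbhd
    {Ω : Type*} {mΩ : MeasurableSpace Ω} (μ : Measure Ω) [IsProbabilityMeasure μ]
    (m : ℕ) (hm : 2 ≤ m)
    (p : ℕ → Fin m → Fin m → Fin m → ℝ)
    (hsymm : ∀ n i j l, p n i j l = p n j i l)
    (hnonneg : ∀ n i j l, 0 ≤ p n i j l)
    (hsum : ∀ n i j, ∑ l, p n i j l = 1)
    (hvol : ∀ n i j l, l ≠ i → l ≠ j → p n i j l = 0)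
    (hsq : ∀ k : Fin m, ∀ x ∈ stdSimplex ℝ (Fin m), qsoMap (p (k : ℕ)) x k = x k ^ 2)
    (ν : ℕ → ℝ) (hν0 : ∀ j, 0 ≤ ν j) (hν1 : ∑' j, ν j = 1)
    (hνpos : ∀ k : Fin m, 0 < ν (k : ℕ))
    (ξ : ℕ → Ω → ℕ) (hξmeas : ∀ n, Measurable (ξ n))
    (hindep : iIndepFun ξ μ)
    (hlaw : ∀ n j, μ {ω | ξ n ω = j} = ENNReal.ofReal (ν j))
    (ε : ℝ) (hε : 0 < ε) :
    ∃ N : ℕ, ∃ q : ℝ, 0 < q ∧ ∀ x ∈ stdSimplex ℝ (Fin m),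
      ENNReal.ofReal q ≤
        μ {ω | ∃ i : Fin m, ∀ j : Fin m, j ≠ i →
            ((List.range N).foldl (fun y n => qsoMap (p (ξ n ω)) y) x) j < ε} := by
  obtain ⟨r, hr⟩ := exists_good_r m hm hε
  haveI : Nonempty (Fin m) := ⟨⟨0, by omega⟩⟩
  set N := (m-1)*r with hN
  set c₀ : ℝ := Finset.univ.inf' Finset.univ_nonempty (fun k : Fin m => ν (k : ℕ)) with hc₀def
  have hc₀ : 0 < c₀ := by
    rw [hc₀def, Finset.lt_inf'_iff]
    exact fun k _ => hνpos k
  refine ⟨N, c₀ ^ N, pow_pos hc₀ N, ?_⟩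
  intro x hx
  obtain ⟨w, S, hlen, hwmem, hcard, hbd⟩ :=
    crush_all p hnonneg hsum hvol hsq r (m-1) x hx (by omega)
  set σ : ℕ → ℕ := fun n => w.getD n 0 with hσ
  have hσm : ∀ n, n < N → σ n < m := by
    intro n hn
    apply hwmem
    have hn' : n < w.length := by rw [hlen]; exact hn
    show w.getD n 0 ∈ w
    rw [List.getD_eq_getElem w 0 hn']
    exact List.getElem_mem hn'
  have hmeasE : μ (⋂ n ∈ Finset.range N, ξ n ⁻¹' {σ n})
      = ∏ n ∈ Finset.range N, μ (ξ n ⁻¹' {σ n}) :=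
    hindep.meas_biInter (fun n _ => ⟨{σ n}, measurableSet_singleton _, rfl⟩)
  have hμE : ENNReal.ofReal (c₀ ^ N) ≤ μ (⋂ n ∈ Finset.range N, ξ n ⁻¹' {σ n}) := by
    rw [hmeasE]
    have hterm : ∀ n ∈ Finset.range N, ENNReal.ofReal c₀ ≤ μ (ξ n ⁻¹' {σ n}) := by
      intro n hn
      have hn' : n < N := Finset.mem_range.mp hn
      have h1 : μ (ξ n ⁻¹' {σ n}) = ENNReal.ofReal (ν (σ n)) := by
        rw [← hlaw n (σ n)]
        rfl
      rw [h1]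
      apply ENNReal.ofReal_le_ofReal
      have := Finset.inf'_le (fun k : Fin m => ν (k : ℕ))
        (Finset.mem_univ (⟨σ n, hσm n hn'⟩ : Fin m))
      exact this
    calc ENNReal.ofReal (c₀^N) = (ENNReal.ofReal c₀)^N := ENNReal.ofReal_pow hc₀.le N
      _ = ∏ _n ∈ Finset.range N, ENNReal.ofReal c₀ := by
          rw [Finset.prod_const, Finset.card_range]
      _ ≤ ∏ n ∈ Finset.range N, μ (ξ n ⁻¹' {σ n}) := Finset.prod_le_prod' hterm
  refine le_trans hμE (le_trans (measure_mono ?_) (le_refl _))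
  intro ω hω
  simp only [Set.mem_iInter, Set.mem_preimage, Set.mem_singleton_iff,
    Finset.mem_range] at hω
  have hfold : (List.range N).foldl (fun y n => qsoMap (p (ξ n ω)) y) x
      = w.foldl (fun y n => qsoMap (p n) y) x := by
    have hmap : (List.range N).map (fun n => ξ n ω) = w := by
      apply List.ext_getElem
      · simp [hlen, hN]
      · intro i h1 h2
        simp only [List.getElem_map, List.getElem_range]
        rw [hω i (by simpa using h1)]
        show w.getD i 0 = w[i]
        exact List.getD_eq_getElem w 0 h2
    rw [← hmap, List.foldl_map]
  obtain ⟨i, hi⟩ : ∃ i, Sᶜ = {i} := by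
    apply Finset.card_eq_one.mp
    rw [Finset.card_compl, hcard, Fintype.card_fin]
    omega
  refine ⟨i, fun j hj => ?_⟩
  have hjS : j ∈ S := by
    by_contra hjS
    have : j ∈ Sᶜ := Finset.mem_compl.mpr hjS
    rw [hi, Finset.mem_singleton] at this
    exact hj this
  rw [hfold]
  calc (w.foldl (fun y n => qsoMap (p n) y) x) j
      ≤ 2 ^ ((m-1) * r) * (1/2:ℝ) ^ (2^r) := hbd j hjS
    _ < ε := hr
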